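/- The torsion of a bounded acyclic chain complex over a field with chosen bases is independent of the choice of bases of the boundary modules: if b_i and b'_i are two choices of bases of the boundary submodules B_i, then the alternating products of determinants agree, i.e. ∏_i det[b_{i-1}b_i/c_i]^{(-1)^i} = ∏_i det[b'_{i-1}b'_i/c_i]^{(-1)^i}. -/

import Mathlib

lemma aux_toMatrix_eq_mul {F : Type*} [Field F] {M : Type*} [AddCommGroup M] [Module F M]
    {ι κ : Type*} [Fintype ι] [DecidableEq ι] [Fintype κ]
    (c : Module.Basis ι F M) (v v' : κ → M) (Q : Matrix κ κ F)
    (h : ∀ j, v' j = ∑ k, Q k j • v k) :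
    c.toMatrix v' = c.toMatrix v * Q := by
  ext i j
  simp [Module.Basis.toMatrix_apply, Matrix.mul_apply, h, Finsupp.smul_apply, map_sum, mul_comm]

lemma aux_tele {F : Type*} [Field F] (g : ℕ → F) (hg : ∀ n, g n ≠ 0) :
    ∀ n, ∏ i ∈ Finset.range n, (g (i + 1) * (g i)⁻¹) = g n * (g 0)⁻¹
  | 0 => by simp [mul_inv_cancel₀ (hg 0)]
  | n + 1 => by
      rw [Finset.prod_range_succ, aux_tele g hg n,
        show g n * (g 0)⁻¹ * (g (n + 1) * (g n)⁻¹)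
          = (g n * (g n)⁻¹) * (g (n + 1) * (g 0)⁻¹) by ring,
        mul_inv_cancel₀ (hg n), one_mul]

theorem stmt_0 (F : Type*) [Field F]
    (C : ℕ → Type*) [∀ i, AddCommGroup (C i)] [∀ i, Module F (C i)]
    (N : ℕ) (hC0 : Subsingleton (C 0)) (hbound : ∀ i, N < i → Subsingleton (C i))
    (ι : ℕ → Type*) [∀ i, Fintype (ι i)] [∀ i, DecidableEq (ι i)]
    (c : ∀ i, Module.Basis (ι i) F (C i))
    (d : ∀ i, C (i + 1) →ₗ[F] C i)
    (hacyc : ∀ i, LinearMap.ker (d i) = LinearMap.range (d (i + 1)))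
    (κ : ℕ → Type*) [∀ i, Fintype (κ i)]
    (e : ∀ i, ι (i + 1) ≃ (κ (i + 1) ⊕ κ i))
    (b b' : ∀ i, Module.Basis (κ i) F ↥(LinearMap.range (d i)))
    (s s' : ∀ i, ↥(LinearMap.range (d i)) →ₗ[F] C (i + 1))
    (hs : ∀ i (x : ↥(LinearMap.range (d i))), d i (s i x) = (x : C i))
    (hs' : ∀ i (x : ↥(LinearMap.range (d i))), d i (s' i x) = (x : C i)) :
    (∏ i ∈ Finset.range N,
      ((c (i + 1)).toMatrix
        (fun q => Sum.elim (fun a => ((b (i + 1) a : ↥(LinearMap.range (d (i + 1)))) : C (i + 1)))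
          (fun a => s i (b i a)) (e i q))).det ^ ((-1 : ℤ) ^ (i + 1))) =
    (∏ i ∈ Finset.range N,
      ((c (i + 1)).toMatrix
        (fun q => Sum.elim (fun a => ((b' (i + 1) a : ↥(LinearMap.range (d (i + 1)))) : C (i + 1)))
          (fun a => s' i (b' i a)) (e i q))).det ^ ((-1 : ℤ) ^ (i + 1))) := by
  classical
  haveI := hC0
  set P : ∀ i, Matrix (κ i) (κ i) F := fun i => (b i).toMatrix ⇑(b' i) with hP
  set u : ℕ → F := fun i => (P i).det with hu
  have hu_ne : ∀ i, u i ≠ 0 := by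
    intro i
    have h1 : P i * (b' i).toMatrix ⇑(b i) = 1 := Module.Basis.toMatrix_mul_toMatrix_flip _ _
    have h2 := congrArg Matrix.det h1
    rw [Matrix.det_mul, Matrix.det_one] at h2
    exact left_ne_zero_of_mul_eq_one h2
  have hempty0 : IsEmpty (κ 0) := by
    haveI : Subsingleton ↥(LinearMap.range (d 0)) := ⟨fun x y => Subtype.ext (Subsingleton.elim _ _)⟩
    exact ⟨fun a => (b 0).ne_zero a (Subsingleton.elim _ _)⟩
  have hemptyN : IsEmpty (κ N) := by
    haveI : Subsingleton (C (N + 1)) := hbound (N + 1) (lt_add_one N)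
    haveI : Subsingleton ↥(LinearMap.range (d N)) := by
      constructor
      intro x y
      obtain ⟨a, ha⟩ := x.2
      obtain ⟨a', ha'⟩ := y.2
      apply Subtype.ext
      rw [← ha, ← ha', Subsingleton.elim a a']
    exact ⟨fun a => (b N).ne_zero a (Subsingleton.elim _ _)⟩
  have u0 : u 0 = 1 := by
    haveI := hempty0
    simp [hu, Matrix.det_isEmpty]
  have uNN : u N = 1 := by
    haveI := hemptyN
    simp [hu, Matrix.det_isEmpty]
  have key : ∀ i,
      ((c (i + 1)).toMatrix
        (fun q => Sum.elim (fun a => ((b' (i + 1) a : ↥(LinearMap.range (d (i + 1)))) : C (i + 1)))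
          (fun a => s' i (b' i a)) (e i q))).det
      = ((c (i + 1)).toMatrix
        (fun q => Sum.elim (fun a => ((b (i + 1) a : ↥(LinearMap.range (d (i + 1)))) : C (i + 1)))
          (fun a => s i (b i a)) (e i q))).det * (u (i + 1) * u i) := by
    intro i
    set v : κ (i + 1) ⊕ κ i → C (i + 1) :=
      Sum.elim (fun a => ((b (i + 1) a : ↥(LinearMap.range (d (i + 1)))) : C (i + 1)))
        (fun a => s i (b i a)) with hv
    set v' : κ (i + 1) ⊕ κ i → C (i + 1) :=
      Sum.elim (fun a => ((b' (i + 1) a : ↥(LinearMap.range (d (i + 1)))) : C (i + 1)))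
        (fun a => s' i (b' i a)) with hv'
    have hexp : ∀ j (a : κ j), b' j a = ∑ k, P j k a • b j k := by
      intro j a
      have := (b j).sum_repr (b' j a)
      rw [← this]
      congr 1
    have hwmem : ∀ a : κ i,
        s' i (b' i a) - ∑ k, P i k a • s i (b i k) ∈ LinearMap.range (d (i + 1)) := by
      intro a
      rw [← hacyc i, LinearMap.mem_ker]
      have hc : ((b' i a : ↥(LinearMap.range (d i))) : C i)
          = ∑ k, P i k a • ((b i k : ↥(LinearMap.range (d i))) : C i) := by
        rw [hexp i a]
        push_cast
        rfl
      simp [map_sub, map_sum, map_smul, hs, hs', hc]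
    set X : Matrix (κ (i + 1)) (κ i) F :=
      fun p a => (b (i + 1)).repr ⟨_, hwmem a⟩ p with hX
    set Q : Matrix (κ (i + 1) ⊕ κ i) (κ (i + 1) ⊕ κ i) F :=
      Matrix.fromBlocks (P (i + 1)) X 0 (P i) with hQ
    have hcol : ∀ j, v' j = ∑ k, Q k j • v k := by
      rintro (p | a)
      · rw [Fintype.sum_sum_type]
        simp only [hQ, hv, hv', Matrix.fromBlocks_apply₁₁, Matrix.fromBlocks_apply₂₁,
          Sum.elim_inl, Sum.elim_inr, Matrix.zero_apply, zero_smul, Finset.sum_const_zero,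
          add_zero]
        rw [hexp (i + 1) p]
        push_cast
        rfl
      · rw [Fintype.sum_sum_type]
        simp only [hQ, hv, hv', Matrix.fromBlocks_apply₁₂, Matrix.fromBlocks_apply₂₂,
          Sum.elim_inl, Sum.elim_inr]
        have hw : (⟨s' i (b' i a) - ∑ k, P i k a • s i (b i k), hwmem a⟩ :
            ↥(LinearMap.range (d (i + 1))))
            = ∑ p, X p a • b (i + 1) p := by
          have := (b (i + 1)).sum_repr
            (⟨s' i (b' i a) - ∑ k, P i k a • s i (b i k), hwmem a⟩ :
              ↥(LinearMap.range (d (i + 1))))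
          rw [← this]
        have hw' : s' i (b' i a) - ∑ k, P i k a • s i (b i k)
            = ∑ p, X p a • ((b (i + 1) p : ↥(LinearMap.range (d (i + 1)))) : C (i + 1)) := by
          have := congrArg (Submodule.subtype (LinearMap.range (d (i + 1)))) hw
          simpa using this
        exact sub_eq_iff_eq_add.mp hw'
    have hM : (c (i + 1)).toMatrix v' = (c (i + 1)).toMatrix v * Q :=
      aux_toMatrix_eq_mul _ _ _ _ hcol
    have hsubm : ∀ (w : κ (i + 1) ⊕ κ i → C (i + 1)),
        (c (i + 1)).toMatrix (fun q => w (e i q))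
          = ((c (i + 1)).toMatrix w).submatrix id (e i) := by
      intro w
      ext r q
      rfl
    have hdetQ : Q.det = u (i + 1) * u i := by
      rw [hQ, Matrix.det_fromBlocks_zero₂₁]
    calc ((c (i + 1)).toMatrix (fun q => v' (e i q))).det
        = (((c (i + 1)).toMatrix v').submatrix id (e i)).det := by rw [hsubm]
      _ = ((((c (i + 1)).toMatrix v).submatrix id (e i)) * (Q.submatrix (e i) (e i))).det := by
          rw [Matrix.submatrix_mul_equiv, hM]
      _ = (((c (i + 1)).toMatrix v).submatrix id (e i)).det * (Q.submatrix (e i) (e i)).det :=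
          Matrix.det_mul _ _
      _ = ((c (i + 1)).toMatrix (fun q => v (e i q))).det * Q.det := by
          rw [hsubm, Matrix.det_submatrix_equiv_self]
      _ = ((c (i + 1)).toMatrix (fun q => v (e i q))).det * (u (i + 1) * u i) := by rw [hdetQ]
  have htele : ∏ i ∈ Finset.range N, (u (i + 1) * u i) ^ ((-1 : ℤ) ^ (i + 1)) = 1 := by
    set g : ℕ → F := fun n => u n ^ ((-1 : ℤ) ^ n) with hg
    have hgne : ∀ n, g n ≠ 0 := fun n => zpow_ne_zero _ (hu_ne n)
    have hterm : ∀ i, (u (i + 1) * u i) ^ ((-1 : ℤ) ^ (i + 1)) = g (i + 1) * (g i)⁻¹ := by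
      intro i
      rw [mul_zpow]
      congr 1
      rw [show ((-1 : ℤ) ^ (i + 1)) = -((-1 : ℤ) ^ i) by ring, zpow_neg]
    rw [Finset.prod_congr rfl (fun i _ => hterm i), aux_tele g hgne N]
    simp [hg, uNN, u0]
  symm
  calc (∏ i ∈ Finset.range N,
      ((c (i + 1)).toMatrix
        (fun q => Sum.elim (fun a => ((b' (i + 1) a : ↥(LinearMap.range (d (i + 1)))) : C (i + 1)))
          (fun a => s' i (b' i a)) (e i q))).det ^ ((-1 : ℤ) ^ (i + 1)))
      = ∏ i ∈ Finset.range N,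
        (((c (i + 1)).toMatrix
          (fun q => Sum.elim (fun a => ((b (i + 1) a : ↥(LinearMap.range (d (i + 1)))) : C (i + 1)))
            (fun a => s i (b i a)) (e i q))).det ^ ((-1 : ℤ) ^ (i + 1))
          * (u (i + 1) * u i) ^ ((-1 : ℤ) ^ (i + 1))) :=
        Finset.prod_congr rfl (fun i _ => by rw [key i, mul_zpow])
    _ = (∏ i ∈ Finset.range N,
        ((c (i + 1)).toMatrix
          (fun q => Sum.elim (fun a => ((b (i + 1) a : ↥(LinearMap.range (d (i + 1)))) : C (i + 1)))
            (fun a => s i (b i a)) (e i q))).det ^ ((-1 : ℤ) ^ (i + 1)))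
        * ∏ i ∈ Finset.range N, (u (i + 1) * u i) ^ ((-1 : ℤ) ^ (i + 1)) :=
        Finset.prod_mul_distrib
    _ = _ := by rw [htele, mul_one]
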